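/- Let n₁, n₂ ≥ 1, l ∈ ℕ, 0 < q_i < p_i ≤ 1 and 0 ≤ α_i ≤ β_i for i = 1,2, and let f : [0,∞) × [0,∞) → ℝ be bounded and continuous. For (x₁,x₂) ∈ [0,1] × [0,1], set δ₁ = √(S((t₁ − x₁)²; x₁, x₂)) and δ₂ = √(S((t₂ − x₂)²; x₁, x₂)), where (t_i − x_i)² denotes the function of (t₁,t₂) equal to (t_i − x_i)². If δ₁ > 0 and δ₂ > 0, then |S(f; x₁, x₂) − f(x₁, x₂)| ≤ 4·ω_total(f; δ₁, δ₂). -/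

import Mathlib

open Finset

/-- The (p,q)-integer `[k]_{p,q} = (p^k - q^k)/(p - q)`. -/
noncomputable def pqInt (p q : ℝ) (k : ℕ) : ℝ := (p ^ k - q ^ k) / (p - q)

/-- The (p,q)-factorial `[n]_{p,q}! = ∏_{k=1}^n [k]_{p,q}`. -/
noncomputable def pqFact (p q : ℝ) (n : ℕ) : ℝ := ∏ k ∈ Finset.Icc 1 n, pqInt p q k

/-- The (p,q)-binomial coefficient `C(n,k)_{p,q}`. -/
noncomputable def pqBinom (p q : ℝ) (n k : ℕ) : ℝ :=
  pqFact p q n / (pqFact p q k * pqFact p q (n - k))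

/-- The (p,q)-Schurer basis function `s_{n,l,ν}^{p,q}(x)`. -/
noncomputable def schurerBasis (p q : ℝ) (n l ν : ℕ) (x : ℝ) : ℝ :=
  (1 / p ^ ((n + l) * (n + l - 1) / 2)) * pqBinom p q (n + l) ν *
    p ^ (ν * (ν - 1) / 2) * x ^ ν * ∏ j ∈ Finset.range (n + l - ν), (p ^ j - q ^ j * x)

/-- The Stancu node `T(ν) = (p^{n-ν}·[ν]_{p,q} + α)/([n]_{p,q} + β)`. -/
noncomputable def stancuNode (p q α β : ℝ) (n ν : ℕ) : ℝ :=
  (p ^ ((n : ℤ) - (ν : ℤ)) * pqInt p q ν + α) / (pqInt p q n + β)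

/-- The bivariate (p,q)-Schurer–Stancu operator. -/
noncomputable def schurerStancu (n₁ n₂ l : ℕ) (p₁ q₁ α₁ β₁ p₂ q₂ α₂ β₂ : ℝ)
    (f : ℝ → ℝ → ℝ) (x₁ x₂ : ℝ) : ℝ :=
  ∑ ν₁ ∈ Finset.range (n₁ + l + 1), ∑ ν₂ ∈ Finset.range (n₂ + l + 1),
    schurerBasis p₁ q₁ n₁ l ν₁ x₁ * schurerBasis p₂ q₂ n₂ l ν₂ x₂ *
      f (stancuNode p₁ q₁ α₁ β₁ n₁ ν₁) (stancuNode p₂ q₂ α₂ β₂ n₂ ν₂)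

/-- The total modulus of continuity on `[0,∞) × [0,∞)`:
`ω_total(f; δ₁, δ₂) = sup{ |f(x,y) − f(x′,y′)| : |x − x′| ≤ δ₁, |y − y′| ≤ δ₂ }`. -/
noncomputable def totalModulus (f : ℝ → ℝ → ℝ) (δ₁ δ₂ : ℝ) : ℝ :=
  sSup { r : ℝ | ∃ x y x' y', 0 ≤ x ∧ 0 ≤ y ∧ 0 ≤ x' ∧ 0 ≤ y' ∧
    |x - x'| ≤ δ₁ ∧ |y - y'| ≤ δ₂ ∧ r = |f x y - f x' y'| }


lemma nat_tri (k : ℕ) : (k + 1) * k / 2 = k * (k - 1) / 2 + k := by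
  cases k with
  | zero => simp
  | succ m =>
    have h1 : (m + 2) * (m + 1) = (m + 1) * m + 2 * (m + 1) := by ring
    have h2 : (m + 1) * (m + 1 - 1) = (m + 1) * m := by simp
    rw [h1, h2, Nat.add_mul_div_left _ _ (by norm_num : 0 < 2)]

section pq
variable {p q : ℝ} (hq : 0 < q) (hqp : q < p)
include hq hqp

lemma pqInt_pos {k : ℕ} (hk : 1 ≤ k) : 0 < pqInt p q k := by
  have hp : 0 < p := hq.trans hqp
  have : q ^ k < p ^ k := pow_lt_pow_left₀ hqp hq.le (by omega)
  exact div_pos (by linarith) (by linarith)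

lemma pqInt_nonneg (k : ℕ) : 0 ≤ pqInt p q k := by
  cases k with
  | zero => simp [pqInt]
  | succ m => exact (pqInt_pos hq hqp (Nat.succ_le_succ (Nat.zero_le m))).le

lemma pqFact_pos (n : ℕ) : 0 < pqFact p q n := by
  refine Finset.prod_pos fun k hk => ?_
  exact pqInt_pos hq hqp (Finset.mem_Icc.mp hk).1

lemma pqFact_succ (n : ℕ) : pqFact p q (n + 1) = pqFact p q n * pqInt p q (n + 1) := by
  rw [pqFact, pqFact, Finset.prod_Icc_succ_top (by omega)]

lemma pqInt_add (a b : ℕ) :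
    pqInt p q (a + b) = p ^ a * pqInt p q b + q ^ b * pqInt p q a := by
  have hpq : p - q ≠ 0 := by linarith
  rw [pqInt, pqInt, pqInt]
  field_simp
  ring

lemma pqBinom_zero (m : ℕ) : pqBinom p q m 0 = 1 := by
  have h0 : pqFact p q 0 = 1 := by simp [pqFact]
  simp only [pqBinom, Nat.sub_zero, h0, one_mul]
  exact div_self (pqFact_pos hq hqp m).ne'

lemma pqBinom_self (m : ℕ) : pqBinom p q m m = 1 := by
  have h := (pqFact_pos hq hqp m).ne'
  simp only [pqBinom, Nat.sub_self]
  have h0 : pqFact p q 0 = 1 := by simp [pqFact]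
  rw [h0, mul_one, div_self h]

lemma pqBinom_pascal {m k : ℕ} (hk : k + 1 ≤ m) :
    pqBinom p q (m + 1) (k + 1) =
      p ^ (k + 1) * pqBinom p q m (k + 1) + q ^ (m - k) * pqBinom p q m k := by
  have hI : pqInt p q (m + 1) = p ^ (k + 1) * pqInt p q (m - k) + q ^ (m - k) * pqInt p q (k + 1) := by
    have := pqInt_add hq hqp (p := p) (q := q) (k + 1) (m - k)
    rw [show k + 1 + (m - k) = m + 1 by omega] at this
    exact this
  have e1 : m + 1 - (k + 1) = m - k := by omega
  have e2 : m - k = (m - (k + 1)) + 1 := by omega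
  rw [pqBinom, pqBinom, pqBinom, e1, pqFact_succ hq hqp m, hI,
    show pqFact p q (k + 1) = pqFact p q k * pqInt p q (k + 1) from pqFact_succ hq hqp k,
    show pqFact p q (m - k) = pqFact p q (m - (k + 1)) * pqInt p q (m - k) by
      rw [e2]; exact pqFact_succ hq hqp _]
  have h1 := (pqFact_pos hq hqp k).ne'
  have h2 := (pqFact_pos hq hqp (m - (k + 1))).ne'
  have h3 := (pqInt_pos hq hqp (k := k + 1) (by omega)).ne'
  have h4 := (pqInt_pos hq hqp (k := m - k) (by omega)).ne'
  field_simp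

lemma sum_P (x : ℝ) : ∀ m : ℕ,
    ∑ ν ∈ range (m + 1), pqBinom p q m ν * p ^ (ν * (ν - 1) / 2) * x ^ ν *
      ∏ j ∈ range (m - ν), (p ^ j - q ^ j * x) = p ^ (m * (m - 1) / 2) := by
  intro m
  induction m with
  | zero => simp [pqBinom_zero hq hqp]
  | succ m ih =>
    set a := fun ν : ℕ => p ^ (ν * (ν - 1) / 2) * x ^ ν with ha
    have ha' : ∀ ν, a (ν + 1) = p ^ ν * x * a ν := by
      intro ν
      simp only [ha]
      rw [show (ν + 1) * (ν + 1 - 1) / 2 = (ν + 1) * ν / 2 by simp, nat_tri, pow_add,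
        pow_succ]
      ring
    have key : ∀ ν ∈ range (m + 1),
        p ^ ν * pqBinom p q m ν * a ν * ∏ j ∈ range (m + 1 - ν), (p ^ j - q ^ j * x)
        + q ^ (m - ν) * pqBinom p q m ν * a (ν + 1) * ∏ j ∈ range (m + 1 - (ν + 1)), (p ^ j - q ^ j * x)
        = p ^ m * (pqBinom p q m ν * a ν * ∏ j ∈ range (m - ν), (p ^ j - q ^ j * x)) := by
      intro ν hν
      have hνm : ν ≤ m := by simpa using Nat.lt_succ_iff.mp (mem_range.mp hν)
      have e1 : m + 1 - ν = (m - ν) + 1 := by omega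
      have e2 : m + 1 - (ν + 1) = m - ν := by omega
      rw [e1, e2, Finset.prod_range_succ, ha' ν]
      have e3 : p ^ ν * p ^ (m - ν) = p ^ m := by
        rw [← pow_add]; congr 1; omega
      have e4 : q ^ (m - ν) * q ^ ν = q ^ m := by
        rw [← pow_add]; congr 1; omega
      linear_combination (pqBinom p q m ν * a ν * ∏ j ∈ range (m - ν), (p ^ j - q ^ j * x)) * e3
    calc ∑ ν ∈ range (m + 1 + 1), pqBinom p q (m+1) ν * p ^ (ν * (ν - 1) / 2) * x ^ ν *
          ∏ j ∈ range (m + 1 - ν), (p ^ j - q ^ j * x)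
        = ∑ ν ∈ range (m + 1 + 1), pqBinom p q (m+1) ν * a ν *
          ∏ j ∈ range (m + 1 - ν), (p ^ j - q ^ j * x) := by
          refine Finset.sum_congr rfl fun ν _ => by rw [ha]; ring
      _ = (∑ k ∈ range m, pqBinom p q (m+1) (k+1) * a (k+1) *
            ∏ j ∈ range (m + 1 - (k+1)), (p ^ j - q ^ j * x))
          + pqBinom p q (m+1) 0 * a 0 * ∏ j ∈ range (m + 1 - 0), (p ^ j - q ^ j * x)
          + pqBinom p q (m+1) (m+1) * a (m+1) * ∏ j ∈ range (m + 1 - (m+1)), (p ^ j - q ^ j * x) := by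
          rw [Finset.sum_range_succ, Finset.sum_range_succ']
      _ = (∑ k ∈ range m,
            (p ^ (k+1) * pqBinom p q m (k+1) * a (k+1) * ∏ j ∈ range (m + 1 - (k+1)), (p ^ j - q ^ j * x)
             + q ^ (m - k) * pqBinom p q m k * a (k+1) * ∏ j ∈ range (m + 1 - (k+1)), (p ^ j - q ^ j * x)))
          + p ^ 0 * pqBinom p q m 0 * a 0 * ∏ j ∈ range (m + 1 - 0), (p ^ j - q ^ j * x)
          + q ^ (m - m) * pqBinom p q m m * a (m+1) * ∏ j ∈ range (m + 1 - (m+1)), (p ^ j - q ^ j * x) := by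
          congr 1
          · congr 1
            · refine Finset.sum_congr rfl fun k hk => ?_
              rw [pqBinom_pascal hq hqp (by simpa using mem_range.mp hk)]
              ring
            · rw [pqBinom_zero hq hqp, pqBinom_zero hq hqp]
              ring
          · rw [pqBinom_self hq hqp, pqBinom_self hq hqp]
            simp
      _ = (∑ ν ∈ range (m+1),
            p ^ ν * pqBinom p q m ν * a ν * ∏ j ∈ range (m + 1 - ν), (p ^ j - q ^ j * x))
          + ∑ ν ∈ range (m+1),
            q ^ (m - ν) * pqBinom p q m ν * a (ν+1) * ∏ j ∈ range (m + 1 - (ν+1)), (p ^ j - q ^ j * x) := by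
          rw [Finset.sum_add_distrib, Finset.sum_range_succ', Finset.sum_range_succ
            (fun ν => q ^ (m - ν) * pqBinom p q m ν * a (ν+1) * ∏ j ∈ range (m + 1 - (ν+1)), (p ^ j - q ^ j * x))]
          ring
      _ = ∑ ν ∈ range (m+1), p ^ m * (pqBinom p q m ν * a ν * ∏ j ∈ range (m - ν), (p ^ j - q ^ j * x)) := by
          rw [← Finset.sum_add_distrib]
          exact Finset.sum_congr rfl key
      _ = p ^ m * ∑ ν ∈ range (m+1), pqBinom p q m ν * p ^ (ν * (ν - 1) / 2) * x ^ ν *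
            ∏ j ∈ range (m - ν), (p ^ j - q ^ j * x) := by
          rw [Finset.mul_sum]
          refine Finset.sum_congr rfl fun ν _ => by rw [ha]; ring
      _ = p ^ ((m+1) * (m + 1 - 1) / 2) := by
          rw [ih, show (m+1) * (m + 1 - 1) / 2 = m * (m-1) / 2 + m by
            simpa using nat_tri m, pow_add]
          ring

lemma schurerBasis_sum (hp1 : p ≤ 1) (n l : ℕ) (x : ℝ) :
    ∑ ν ∈ range (n + l + 1), schurerBasis p q n l ν x = 1 := by
  have hp : 0 < p := hq.trans hqp
  have hpow : (0:ℝ) < p ^ ((n + l) * (n + l - 1) / 2) := pow_pos hp _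
  simp only [schurerBasis]
  rw [show ∀ S : ℕ → ℝ, ∑ ν ∈ range (n + l + 1),
      1 / p ^ ((n + l) * (n + l - 1) / 2) * pqBinom p q (n + l) ν * p ^ (ν * (ν - 1) / 2)
        * x ^ ν * S ν
      = 1 / p ^ ((n + l) * (n + l - 1) / 2) * ∑ ν ∈ range (n + l + 1),
        pqBinom p q (n + l) ν * p ^ (ν * (ν - 1) / 2) * x ^ ν * S ν from fun S => by
      rw [Finset.mul_sum]; exact Finset.sum_congr rfl fun ν _ => by ring]
  rw [sum_P hq hqp x (n + l)]
  field_simp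

lemma schurerBasis_nonneg (n l ν : ℕ) {x : ℝ} (hx0 : 0 ≤ x) (hx1 : x ≤ 1) :
    0 ≤ schurerBasis p q n l ν x := by
  have hp : 0 < p := hq.trans hqp
  have hb : 0 < pqBinom p q (n + l) ν :=
    div_pos (pqFact_pos hq hqp _) (mul_pos (pqFact_pos hq hqp _) (pqFact_pos hq hqp _))
  have hprod : 0 ≤ ∏ j ∈ range (n + l - ν), (p ^ j - q ^ j * x) := by
    refine Finset.prod_nonneg fun j _ => ?_
    have h1 : q ^ j * x ≤ q ^ j := by
      nlinarith [pow_pos hq j]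
    have h2 : q ^ j ≤ p ^ j := pow_le_pow_left₀ hq.le hqp.le j
    linarith
  rw [schurerBasis]
  exact mul_nonneg (mul_nonneg (mul_nonneg (mul_nonneg (by positivity) hb.le)
    (by positivity)) (by positivity)) hprod

lemma stancuNode_nonneg {α β : ℝ} (hα : 0 ≤ α) (hβ : α ≤ β) {n : ℕ} (hn : 1 ≤ n) (ν : ℕ) :
    0 ≤ stancuNode p q α β n ν := by
  have hp : 0 < p := hq.trans hqp
  have h1 : (0:ℝ) < p ^ ((n : ℤ) - (ν : ℤ)) := zpow_pos hp _
  have h2 := pqInt_nonneg hq hqp ν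
  have h3 := pqInt_pos hq hqp hn
  exact div_nonneg (by positivity) (by linarith)

end pq

/-- **Rate of convergence for bivariate (p,q)-Schurer–Stancu operators.** With
`δᵢ = √(S((tᵢ − xᵢ)²; x₁, x₂))`, for any bounded continuous `f : [0,∞)² → ℝ` and
`(x₁, x₂) ∈ [0,1]²` one has `|S(f; x₁, x₂) − f(x₁, x₂)| ≤ 4·ω_total(f; δ₁, δ₂)`. -/
theorem schurerStancu_rate_of_convergence (n₁ n₂ l : ℕ) (hn₁ : 1 ≤ n₁) (hn₂ : 1 ≤ n₂)
    (p₁ q₁ α₁ β₁ p₂ q₂ α₂ β₂ : ℝ)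
    (hq₁ : 0 < q₁) (hq₁p : q₁ < p₁) (hp₁ : p₁ ≤ 1) (hα₁ : 0 ≤ α₁) (hαβ₁ : α₁ ≤ β₁)
    (hq₂ : 0 < q₂) (hq₂p : q₂ < p₂) (hp₂ : p₂ ≤ 1) (hα₂ : 0 ≤ α₂) (hαβ₂ : α₂ ≤ β₂)
    (f : ℝ → ℝ → ℝ)
    (hfb : ∃ M, ∀ t s, 0 ≤ t → 0 ≤ s → |f t s| ≤ M)
    (hfc : ContinuousOn (fun z : ℝ × ℝ => f z.1 z.2) (Set.Ici 0 ×ˢ Set.Ici 0))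
    (x₁ x₂ : ℝ) (hx₁ : x₁ ∈ Set.Icc (0 : ℝ) 1) (hx₂ : x₂ ∈ Set.Icc (0 : ℝ) 1)
    (δ₁ δ₂ : ℝ)
    (hδ₁ : δ₁ = Real.sqrt (schurerStancu n₁ n₂ l p₁ q₁ α₁ β₁ p₂ q₂ α₂ β₂
      (fun t₁ _ => (t₁ - x₁) ^ 2) x₁ x₂))
    (hδ₂ : δ₂ = Real.sqrt (schurerStancu n₁ n₂ l p₁ q₁ α₁ β₁ p₂ q₂ α₂ β₂
      (fun _ t₂ => (t₂ - x₂) ^ 2) x₁ x₂))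
    (hδ₁pos : 0 < δ₁) (hδ₂pos : 0 < δ₂) :
    |schurerStancu n₁ n₂ l p₁ q₁ α₁ β₁ p₂ q₂ α₂ β₂ f x₁ x₂ - f x₁ x₂| ≤
      4 * totalModulus f δ₁ δ₂ := by
  clear hfc
  obtain ⟨M, hM⟩ := hfb
  obtain ⟨hx₁0, hx₁1⟩ := hx₁
  obtain ⟨hx₂0, hx₂1⟩ := hx₂
  set Ω : Set ℝ := { r : ℝ | ∃ x y x' y', 0 ≤ x ∧ 0 ≤ y ∧ 0 ≤ x' ∧ 0 ≤ y' ∧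
    |x - x'| ≤ δ₁ ∧ |y - y'| ≤ δ₂ ∧ r = |f x y - f x' y'| } with hΩdef
  have hΩeq : totalModulus f δ₁ δ₂ = sSup Ω := by rw [totalModulus, hΩdef]
  have hΩbdd : BddAbove Ω := by
    refine ⟨M + M, ?_⟩
    rintro r ⟨x, y, x', y', hx, hy, hx', hy', -, -, rfl⟩
    calc |f x y - f x' y'| ≤ |f x y| + |f x' y'| := abs_sub _ _
      _ ≤ M + M := add_le_add (hM x y hx hy) (hM x' y' hx' hy')
  set ω := totalModulus f δ₁ δ₂ with hωdef
  have hmem : ∀ x y x' y' : ℝ, 0 ≤ x → 0 ≤ y → 0 ≤ x' → 0 ≤ y' → |x - x'| ≤ δ₁ →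
      |y - y'| ≤ δ₂ → |f x y - f x' y'| ≤ ω := by
    intro x y x' y' hx hy hx' hy' h1 h2
    rw [hΩeq]
    exact le_csSup hΩbdd ⟨x, y, x', y', hx, hy, hx', hy', h1, h2, rfl⟩
  have hω0 : 0 ≤ ω := by
    have := hmem 0 0 0 0 le_rfl le_rfl le_rfl le_rfl (by simpa using hδ₁pos.le)
      (by simpa using hδ₂pos.le)
    simpa using this
  -- telescoping in the first variable
  have hstep1 : ∀ t x y : ℝ, 0 ≤ t → 0 ≤ x → 0 ≤ y → ∀ m : ℕ, |t - x| ≤ m * δ₁ →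
      |f t y - f x y| ≤ m * ω := by
    intro t x y ht hx hy m hm
    rcases Nat.eq_zero_or_pos m with rfl | hmpos
    · simp only [Nat.cast_zero, zero_mul] at hm ⊢
      have h0 : t - x = 0 := abs_eq_zero.mp (le_antisymm hm (abs_nonneg _))
      have : t = x := by linarith
      rw [this, sub_self, abs_zero]
    · set h : ℝ := (t - x) / m with hh
      have hm0 : (0:ℝ) < m := Nat.cast_pos.mpr hmpos
      have habs : |h| ≤ δ₁ := by
        rw [hh, abs_div, Nat.abs_cast, div_le_iff₀ hm0]
        linarith [hm]
      have hmh : x + (m:ℝ) * h = t := by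
        rw [hh]; field_simp; ring
      have hnn : ∀ i : ℕ, i ≤ m → 0 ≤ x + i * h := by
        intro i hi
        rcases le_or_gt x t with hle | hlt
        · have h0 : 0 ≤ h := div_nonneg (by linarith) hm0.le
          have : 0 ≤ (i:ℝ) * h := mul_nonneg (Nat.cast_nonneg i) h0
          linarith
        · have h0 : h ≤ 0 := div_nonpos_of_nonpos_of_nonneg (by linarith) hm0.le
          have h1 : (m:ℝ) * h ≤ i * h :=
            mul_le_mul_of_nonpos_right (by exact_mod_cast hi) h0
          linarith
      have tele : f t y - f x y =
          ∑ i ∈ Finset.range m, (f (x + (↑(i+1)) * h) y - f (x + (i:ℝ) * h) y) := by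
        rw [Finset.sum_range_sub (fun i : ℕ => f (x + (i:ℝ) * h) y)]
        norm_num [hmh]
      calc |f t y - f x y|
          = |∑ i ∈ Finset.range m, (f (x + (↑(i+1)) * h) y - f (x + (i:ℝ) * h) y)| := by
            rw [tele]
        _ ≤ ∑ i ∈ Finset.range m, |f (x + (↑(i+1)) * h) y - f (x + (i:ℝ) * h) y| :=
            Finset.abs_sum_le_sum_abs _ _
        _ ≤ ∑ _i ∈ Finset.range m, ω := by
            refine Finset.sum_le_sum fun i hi => ?_
            have hi' : i < m := Finset.mem_range.mp hi
            have e : x + (↑(i+1)) * h - (x + (i:ℝ) * h) = h := by push_cast; ring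
            refine hmem _ _ _ _ (hnn (i+1) (by omega)) hy (hnn i (by omega)) hy ?_
              (by simpa using hδ₂pos.le)
            rw [e]; exact habs
        _ = m * ω := by rw [Finset.sum_const, Finset.card_range, nsmul_eq_mul]
  -- telescoping in the second variable
  have hstep2 : ∀ x t s : ℝ, 0 ≤ x → 0 ≤ t → 0 ≤ s → ∀ m : ℕ, |t - s| ≤ m * δ₂ →
      |f x t - f x s| ≤ m * ω := by
    intro x t s hx ht hs m hm
    rcases Nat.eq_zero_or_pos m with rfl | hmpos
    · simp only [Nat.cast_zero, zero_mul] at hm ⊢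
      have h0 : t - s = 0 := abs_eq_zero.mp (le_antisymm hm (abs_nonneg _))
      have : t = s := by linarith
      rw [this, sub_self, abs_zero]
    · set h : ℝ := (t - s) / m with hh
      have hm0 : (0:ℝ) < m := Nat.cast_pos.mpr hmpos
      have habs : |h| ≤ δ₂ := by
        rw [hh, abs_div, Nat.abs_cast, div_le_iff₀ hm0]
        linarith [hm]
      have hmh : s + (m:ℝ) * h = t := by
        rw [hh]; field_simp; ring
      have hnn : ∀ i : ℕ, i ≤ m → 0 ≤ s + i * h := by
        intro i hi
        rcases le_or_gt s t with hle | hlt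
        · have h0 : 0 ≤ h := div_nonneg (by linarith) hm0.le
          have : 0 ≤ (i:ℝ) * h := mul_nonneg (Nat.cast_nonneg i) h0
          linarith
        · have h0 : h ≤ 0 := div_nonpos_of_nonpos_of_nonneg (by linarith) hm0.le
          have h1 : (m:ℝ) * h ≤ i * h :=
            mul_le_mul_of_nonpos_right (by exact_mod_cast hi) h0
          linarith
      have tele : f x t - f x s =
          ∑ i ∈ Finset.range m, (f x (s + (↑(i+1)) * h) - f x (s + (i:ℝ) * h)) := by
        rw [Finset.sum_range_sub (fun i : ℕ => f x (s + (i:ℝ) * h))]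
        norm_num [hmh]
      calc |f x t - f x s|
          = |∑ i ∈ Finset.range m, (f x (s + (↑(i+1)) * h) - f x (s + (i:ℝ) * h))| := by
            rw [tele]
        _ ≤ ∑ i ∈ Finset.range m, |f x (s + (↑(i+1)) * h) - f x (s + (i:ℝ) * h)| :=
            Finset.abs_sum_le_sum_abs _ _
        _ ≤ ∑ _i ∈ Finset.range m, ω := by
            refine Finset.sum_le_sum fun i hi => ?_
            have hi' : i < m := Finset.mem_range.mp hi
            have e : s + (↑(i+1)) * h - (s + (i:ℝ) * h) = h := by push_cast; ring
            refine hmem _ _ _ _ hx (hnn (i+1) (by omega)) hx (hnn i (by omega))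
              (by simpa using hδ₁pos.le) ?_
            rw [e]; exact habs
        _ = m * ω := by rw [Finset.sum_const, Finset.card_range, nsmul_eq_mul]
  -- pointwise estimate
  have keypt : ∀ t s : ℝ, 0 ≤ t → 0 ≤ s →
      |f t s - f x₁ x₂| ≤ (2 + |t - x₁| / δ₁ + |s - x₂| / δ₂) * ω := by
    intro t s ht hs
    set m : ℕ := ⌊|t - x₁| / δ₁⌋₊ + 1 with hmdef
    set n : ℕ := ⌊|s - x₂| / δ₂⌋₊ + 1 with hndef
    have hq1 : |t - x₁| / δ₁ < (m:ℝ) := by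
      rw [hmdef]; push_cast; exact Nat.lt_floor_add_one _
    have hq2 : |s - x₂| / δ₂ < (n:ℝ) := by
      rw [hndef]; push_cast; exact Nat.lt_floor_add_one _
    have hb1 : |t - x₁| ≤ m * δ₁ := by
      have := (div_lt_iff₀ hδ₁pos).mp hq1
      linarith
    have hb2 : |s - x₂| ≤ n * δ₂ := by
      have := (div_lt_iff₀ hδ₂pos).mp hq2
      linarith
    have hc1 : (m:ℝ) ≤ 1 + |t - x₁| / δ₁ := by
      rw [hmdef]; push_cast
      have := Nat.floor_le (show 0 ≤ |t - x₁| / δ₁ by positivity)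
      linarith
    have hc2 : (n:ℝ) ≤ 1 + |s - x₂| / δ₂ := by
      rw [hndef]; push_cast
      have := Nat.floor_le (show 0 ≤ |s - x₂| / δ₂ by positivity)
      linarith
    calc |f t s - f x₁ x₂| ≤ |f t s - f t x₂| + |f t x₂ - f x₁ x₂| := abs_sub_le _ _ _
      _ ≤ n * ω + m * ω :=
          add_le_add (hstep2 t s x₂ ht hs hx₂0 n hb2) (hstep1 t x₁ x₂ ht hx₁0 hx₂0 m hb1)
      _ ≤ (2 + |t - x₁| / δ₁ + |s - x₂| / δ₂) * ω := by nlinarith [hω0, hc1, hc2]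
  -- the operator as a single sum
  set R : Finset (ℕ × ℕ) := Finset.range (n₁ + l + 1) ×ˢ Finset.range (n₂ + l + 1) with hR
  set w : ℕ × ℕ → ℝ :=
    fun ν => schurerBasis p₁ q₁ n₁ l ν.1 x₁ * schurerBasis p₂ q₂ n₂ l ν.2 x₂ with hw
  set t1 : ℕ × ℕ → ℝ := fun ν => stancuNode p₁ q₁ α₁ β₁ n₁ ν.1 with ht1
  set t2 : ℕ × ℕ → ℝ := fun ν => stancuNode p₂ q₂ α₂ β₂ n₂ ν.2 with ht2
  have hrepr : ∀ g : ℝ → ℝ → ℝ, schurerStancu n₁ n₂ l p₁ q₁ α₁ β₁ p₂ q₂ α₂ β₂ g x₁ x₂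
      = ∑ ν ∈ R, w ν * g (t1 ν) (t2 ν) := by
    intro g
    rw [schurerStancu, hR, Finset.sum_product]
  have hwnn : ∀ ν : ℕ × ℕ, 0 ≤ w ν := fun ν =>
    mul_nonneg (schurerBasis_nonneg hq₁ hq₁p _ _ _ hx₁0 hx₁1)
      (schurerBasis_nonneg hq₂ hq₂p _ _ _ hx₂0 hx₂1)
  have ht1nn : ∀ ν : ℕ × ℕ, 0 ≤ t1 ν := fun ν =>
    stancuNode_nonneg hq₁ hq₁p hα₁ hαβ₁ hn₁ _
  have ht2nn : ∀ ν : ℕ × ℕ, 0 ≤ t2 ν := fun ν =>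
    stancuNode_nonneg hq₂ hq₂p hα₂ hαβ₂ hn₂ _
  have hsumw : ∑ ν ∈ R, w ν = 1 := by
    rw [hR, Finset.sum_product]
    calc ∑ ν₁ ∈ Finset.range (n₁ + l + 1), ∑ ν₂ ∈ Finset.range (n₂ + l + 1), w (ν₁, ν₂)
        = ∑ ν₁ ∈ Finset.range (n₁ + l + 1), schurerBasis p₁ q₁ n₁ l ν₁ x₁ *
            ∑ ν₂ ∈ Finset.range (n₂ + l + 1), schurerBasis p₂ q₂ n₂ l ν₂ x₂ := by
          refine Finset.sum_congr rfl fun ν₁ _ => ?_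
          rw [Finset.mul_sum]
      _ = 1 := by
          rw [schurerBasis_sum hq₂ hq₂p hp₂ n₂ l x₂]
          simp only [mul_one]
          exact schurerBasis_sum hq₁ hq₁p hp₁ n₁ l x₁
  have hm1 : ∑ ν ∈ R, w ν * (t1 ν - x₁) ^ 2 = δ₁ ^ 2 := by
    have hS : 0 ≤ schurerStancu n₁ n₂ l p₁ q₁ α₁ β₁ p₂ q₂ α₂ β₂
        (fun t₁ _ => (t₁ - x₁) ^ 2) x₁ x₂ := by
      rw [hrepr]
      exact Finset.sum_nonneg fun ν _ => mul_nonneg (hwnn ν) (sq_nonneg _)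
    rw [hδ₁, Real.sq_sqrt hS, hrepr]
  have hm2 : ∑ ν ∈ R, w ν * (t2 ν - x₂) ^ 2 = δ₂ ^ 2 := by
    have hS : 0 ≤ schurerStancu n₁ n₂ l p₁ q₁ α₁ β₁ p₂ q₂ α₂ β₂
        (fun _ t₂ => (t₂ - x₂) ^ 2) x₁ x₂ := by
      rw [hrepr]
      exact Finset.sum_nonneg fun ν _ => mul_nonneg (hwnn ν) (sq_nonneg _)
    rw [hδ₂, Real.sq_sqrt hS, hrepr]
  have hA : ∑ ν ∈ R, w ν * |t1 ν - x₁| ≤ δ₁ := by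
    have hcs := Finset.sum_mul_sq_le_sq_mul_sq R (fun ν => Real.sqrt (w ν))
      (fun ν => Real.sqrt (w ν) * |t1 ν - x₁|)
    have e1 : ∀ ν ∈ R, Real.sqrt (w ν) * (Real.sqrt (w ν) * |t1 ν - x₁|)
        = w ν * |t1 ν - x₁| := fun ν _ => by
      rw [← mul_assoc, Real.mul_self_sqrt (hwnn ν)]
    have e2 : ∀ ν ∈ R, Real.sqrt (w ν) ^ 2 = w ν := fun ν _ => Real.sq_sqrt (hwnn ν)
    have e3 : ∀ ν ∈ R, (Real.sqrt (w ν) * |t1 ν - x₁|) ^ 2 = w ν * (t1 ν - x₁) ^ 2 :=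
      fun ν _ => by rw [mul_pow, Real.sq_sqrt (hwnn ν), sq_abs]
    rw [Finset.sum_congr rfl e1, Finset.sum_congr rfl e2, Finset.sum_congr rfl e3,
      hsumw, hm1, one_mul] at hcs
    have hAnn : 0 ≤ ∑ ν ∈ R, w ν * |t1 ν - x₁| :=
      Finset.sum_nonneg fun ν _ => mul_nonneg (hwnn ν) (abs_nonneg _)
    exact (pow_le_pow_iff_left₀ hAnn hδ₁pos.le two_ne_zero).mp hcs
  have hB : ∑ ν ∈ R, w ν * |t2 ν - x₂| ≤ δ₂ := by
    have hcs := Finset.sum_mul_sq_le_sq_mul_sq R (fun ν => Real.sqrt (w ν))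
      (fun ν => Real.sqrt (w ν) * |t2 ν - x₂|)
    have e1 : ∀ ν ∈ R, Real.sqrt (w ν) * (Real.sqrt (w ν) * |t2 ν - x₂|)
        = w ν * |t2 ν - x₂| := fun ν _ => by
      rw [← mul_assoc, Real.mul_self_sqrt (hwnn ν)]
    have e2 : ∀ ν ∈ R, Real.sqrt (w ν) ^ 2 = w ν := fun ν _ => Real.sq_sqrt (hwnn ν)
    have e3 : ∀ ν ∈ R, (Real.sqrt (w ν) * |t2 ν - x₂|) ^ 2 = w ν * (t2 ν - x₂) ^ 2 :=
      fun ν _ => by rw [mul_pow, Real.sq_sqrt (hwnn ν), sq_abs]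
    rw [Finset.sum_congr rfl e1, Finset.sum_congr rfl e2, Finset.sum_congr rfl e3,
      hsumw, hm2, one_mul] at hcs
    have hBnn : 0 ≤ ∑ ν ∈ R, w ν * |t2 ν - x₂| :=
      Finset.sum_nonneg fun ν _ => mul_nonneg (hwnn ν) (abs_nonneg _)
    exact (pow_le_pow_iff_left₀ hBnn hδ₂pos.le two_ne_zero).mp hcs
  have hdiff : schurerStancu n₁ n₂ l p₁ q₁ α₁ β₁ p₂ q₂ α₂ β₂ f x₁ x₂ - f x₁ x₂
      = ∑ ν ∈ R, w ν * (f (t1 ν) (t2 ν) - f x₁ x₂) := by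
    rw [hrepr f]
    rw [show ∑ ν ∈ R, w ν * (f (t1 ν) (t2 ν) - f x₁ x₂)
        = ∑ ν ∈ R, w ν * f (t1 ν) (t2 ν) - (∑ ν ∈ R, w ν) * f x₁ x₂ by
      rw [Finset.sum_mul, ← Finset.sum_sub_distrib]
      exact Finset.sum_congr rfl fun ν _ => by ring]
    rw [hsumw, one_mul]
  calc |schurerStancu n₁ n₂ l p₁ q₁ α₁ β₁ p₂ q₂ α₂ β₂ f x₁ x₂ - f x₁ x₂|
      = |∑ ν ∈ R, w ν * (f (t1 ν) (t2 ν) - f x₁ x₂)| := by rw [hdiff]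
    _ ≤ ∑ ν ∈ R, |w ν * (f (t1 ν) (t2 ν) - f x₁ x₂)| := Finset.abs_sum_le_sum_abs _ _
    _ ≤ ∑ ν ∈ R, w ν * ((2 + |t1 ν - x₁| / δ₁ + |t2 ν - x₂| / δ₂) * ω) := by
        refine Finset.sum_le_sum fun ν _ => ?_
        rw [abs_mul, abs_of_nonneg (hwnn ν)]
        exact mul_le_mul_of_nonneg_left (keypt _ _ (ht1nn ν) (ht2nn ν)) (hwnn ν)
    _ = 2 * ω * (∑ ν ∈ R, w ν) + (ω / δ₁) * (∑ ν ∈ R, w ν * |t1 ν - x₁|)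
        + (ω / δ₂) * (∑ ν ∈ R, w ν * |t2 ν - x₂|) := by
        rw [Finset.mul_sum, Finset.mul_sum, Finset.mul_sum, ← Finset.sum_add_distrib,
          ← Finset.sum_add_distrib]
        refine Finset.sum_congr rfl fun ν _ => ?_
        field_simp
    _ ≤ 2 * ω * 1 + (ω / δ₁) * δ₁ + (ω / δ₂) * δ₂ := by
        refine add_le_add (add_le_add (le_of_eq (by rw [hsumw])) ?_) ?_
        · exact mul_le_mul_of_nonneg_left hA (by positivity)
        · exact mul_le_mul_of_nonneg_left hB (by positivity)
    _ = 4 * ω := by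
        field_simp
        ring
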